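/- arXiv:2007.07752 — 5 statements merged into one kernel-verified Lean document; each statement's English description precedes it below -/
import Mathlib

section
/- Let f : ℝ → ℝ be the smooth map f(x) = x². There is no smooth manifold P together with smooth maps p_L : P → ℝ and p_R : P → ℝ with f ∘ p_L = f ∘ p_R such that the span (p_L, p_R) is a pullback of the cospan (f, f) in the category of smooth manifolds. Consequently, the category of smooth manifolds and smooth maps does not have pullbacks. -/
open Manifold

/-- A smooth (boundaryless, `C^∞`) manifold: a Hausdorff, second countable topological
space with a smooth atlas modeled on `ℝⁿ` for some `n`. -/
structure SmoothMfld where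
  dim : ℕ
  carrier : Type
  [topology : TopologicalSpace carrier]
  [charts : ChartedSpace (EuclideanSpace ℝ (Fin dim)) carrier]
  [smooth : IsManifold (𝓡 dim) (⊤ : ℕ∞) carrier]
  [t2 : T2Space carrier]
  [secCount : SecondCountableTopology carrier]

attribute [instance] SmoothMfld.topology SmoothMfld.charts SmoothMfld.smooth
  SmoothMfld.t2 SmoothMfld.secCount

/-- The model with corners of a bundled smooth manifold. -/
noncomputable def SmoothMfld.model (M : SmoothMfld) := 𝓡 M.dim

/-- A smooth map between bundled smooth manifolds. -/
def SmoothMap' (M N : SmoothMfld) (f : M.carrier → N.carrier) : Prop :=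
  ContMDiff M.model N.model (⊤ : ℕ∞) f

/-- The span `(sL, sR)` is a pullback of the cospan `(f, g)` in the category of smooth
manifolds: the square commutes, and every span of smooth maps commuting with `(f, g)`
factors uniquely through it by a smooth map. -/
def IsSmoothPullback (X Y Z S : SmoothMfld) (f : X.carrier → Z.carrier)
    (g : Y.carrier → Z.carrier) (sL : S.carrier → X.carrier) (sR : S.carrier → Y.carrier) :
    Prop :=
  SmoothMap' S X sL ∧ SmoothMap' S Y sR ∧ f ∘ sL = g ∘ sR ∧
    ∀ (Q : SmoothMfld) (qL : Q.carrier → X.carrier) (qR : Q.carrier → Y.carrier),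
      SmoothMap' Q X qL → SmoothMap' Q Y qR → f ∘ qL = g ∘ qR →
      ∃! φ : Q.carrier → S.carrier, SmoothMap' Q S φ ∧ sL ∘ φ = qL ∧ sR ∘ φ = qR

open Metric Set

/- ### Auxiliary material -/

/-- A continuous nonvanishing real function on a preconnected set has constant sign. -/
lemma aux_sign {α : Type*} [TopologicalSpace α] {C : Set α} (hC : IsPreconnected C)
    {g : α → ℝ} (hg : ContinuousOn g C) (h0 : ∀ x ∈ C, g x ≠ 0)
    {a b : α} (ha : a ∈ C) (hb : b ∈ C) (hga : 0 < g a) : 0 < g b := by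
  rcases (h0 b hb).lt_or_gt with h | h
  · exfalso
    have himg : IsPreconnected (g '' C) := hC.image g hg
    have h0m : (0 : ℝ) ∈ g '' C :=
      himg.Icc_subset ⟨b, hb, rfl⟩ ⟨a, ha, rfl⟩ ⟨h.le, hga.le⟩
    obtain ⟨x, hx, hgx⟩ := h0m
    exact h0 x hx hgx
  · exact h

lemma aux_uIcc {u₀ c₁ c₂ ε x : ℝ} (h1 : |c₁ - u₀| < ε) (h2 : |c₂ - u₀| < ε)
    (hx : x ∈ Set.uIcc c₁ c₂) : |x - u₀| < ε := by
  rw [Set.mem_uIcc] at hx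
  rw [abs_lt] at h1 h2 ⊢
  rcases hx with ⟨h, h'⟩ | ⟨h, h'⟩ <;> constructor <;>
    linarith [h1.1, h1.2, h2.1, h2.2]

/-- A punctured ball in a real normed space of rank `> 1` is preconnected. -/
theorem aux_ball (E : Type*) [NormedAddCommGroup E] [NormedSpace ℝ E]
    (hrank : 1 < Module.rank ℝ E) (u : E) {r : ℝ} (hr : 0 < r) :
    IsPreconnected (ball u r \ {u}) := by
  set φ := OpenPartialHomeomorph.univBall (c := u) (r := r) with hφ
  have hsrc : φ.source = univ := OpenPartialHomeomorph.univBall_source u r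
  have htgt : φ.target = ball u r := OpenPartialHomeomorph.univBall_target u hr
  have h0 : φ 0 = u := OpenPartialHomeomorph.univBall_apply_zero u r
  have himg : ball u r \ {u} = φ '' ({0}ᶜ) := by
    ext y
    constructor
    · rintro ⟨hy, hy'⟩
      refine ⟨φ.symm y, ?_, φ.right_inv (htgt ▸ hy)⟩
      intro h0'
      apply hy'
      have h := φ.right_inv (htgt ▸ hy)
      rw [mem_singleton_iff, ← h, h0', h0]
    · rintro ⟨x, hx, rfl⟩
      refine ⟨htgt ▸ φ.map_source (by simp [hsrc]), ?_⟩
      simp only [mem_singleton_iff]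
      intro h
      exact hx (φ.injOn (by simp [hsrc]) (by simp [hsrc]) (by rw [h, h0]))
  rw [himg]
  exact ((isConnected_compl_singleton_of_one_lt_rank hrank 0).isPreconnected).image _
    (φ.continuousOn.mono (by simp [hsrc]))

/-- The point, as a bundled smooth manifold. -/
@[reducible] noncomputable def Q0 : SmoothMfld := ⟨0, EuclideanSpace ℝ (Fin 0)⟩

/-- The real line, as a bundled smooth manifold. -/
@[reducible] noncomputable def Q1 : SmoothMfld := ⟨1, EuclideanSpace ℝ (Fin 1)⟩

noncomputable def q0pt : Q0.carrier := (0 : EuclideanSpace ℝ (Fin 0))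

noncomputable def e1 : EuclideanSpace ℝ (Fin 1) ≃L[ℝ] ℝ :=
  (EuclideanSpace.equiv (Fin 1) ℝ).trans (ContinuousLinearEquiv.funUnique (Fin 1) ℝ ℝ)

lemma e1_smooth : ContMDiff (𝓡 1) 𝓘(ℝ, ℝ) (⊤ : ℕ∞) (e1 : EuclideanSpace ℝ (Fin 1) → ℝ) :=
  contMDiff_iff_contDiff.mpr (e1 : EuclideanSpace ℝ (Fin 1) →L[ℝ] ℝ).contDiff

lemma e1_symm_smooth : ContMDiff 𝓘(ℝ, ℝ) (𝓡 1) (⊤ : ℕ∞) (e1.symm : ℝ → EuclideanSpace ℝ (Fin 1)) :=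
  contMDiff_iff_contDiff.mpr (e1.symm : ℝ →L[ℝ] EuclideanSpace ℝ (Fin 1)).contDiff

theorem no_pb :
    ¬ ∃ (P : SmoothMfld) (pL pR : P.carrier → ℝ),
      ContMDiff P.model 𝓘(ℝ, ℝ) (⊤ : ℕ∞) pL ∧ ContMDiff P.model 𝓘(ℝ, ℝ) (⊤ : ℕ∞) pR ∧
      (fun x : ℝ => x ^ 2) ∘ pL = (fun x : ℝ => x ^ 2) ∘ pR ∧
      ∀ (Q : SmoothMfld) (qL qR : Q.carrier → ℝ),
        ContMDiff Q.model 𝓘(ℝ, ℝ) (⊤ : ℕ∞) qL → ContMDiff Q.model 𝓘(ℝ, ℝ) (⊤ : ℕ∞) qR →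
        (fun x : ℝ => x ^ 2) ∘ qL = (fun x : ℝ => x ^ 2) ∘ qR →
        ∃! φ : Q.carrier → P.carrier,
          ContMDiff Q.model P.model (⊤ : ℕ∞) φ ∧ pL ∘ φ = qL ∧ pR ∘ φ = qR := by
  rintro ⟨P, pL, pR, hpL, hpR, hcomm, huniv⟩
  -- the points of `P` are in bijection with `{(a,b) | a² = b²}`
  have hpoint : ∀ a b : ℝ, a ^ 2 = b ^ 2 → ∃! p : P.carrier, pL p = a ∧ pR p = b := by
    intro a b hab
    obtain ⟨φ, ⟨hφs, hφL, hφR⟩, hφu⟩ :=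
      huniv Q0 (fun _ => a) (fun _ => b) contMDiff_const contMDiff_const
        (funext fun _ => by simpa using hab)
    refine ⟨φ q0pt, ⟨congrFun hφL q0pt, congrFun hφR q0pt⟩, ?_⟩
    rintro p ⟨hpa, hpb⟩
    have h1 := hφu (fun _ => p)
      ⟨contMDiff_const, funext fun _ => hpa, funext fun _ => hpb⟩
    exact congrFun h1 q0pt
  -- the diagonal and antidiagonal curves
  have hs1 : ContMDiff Q1.model 𝓘(ℝ, ℝ) (⊤ : ℕ∞) (fun x : Q1.carrier => e1 x) := e1_smooth
  obtain ⟨φd, ⟨hφds, hφdL, hφdR⟩, -⟩ :=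
    huniv Q1 (fun x => e1 x) (fun x => e1 x) hs1 hs1 rfl
  obtain ⟨φa, ⟨hφas, hφaL, hφaR⟩, -⟩ :=
    huniv Q1 (fun x => e1 x) (fun x => -(e1 x)) hs1 hs1.neg
      (funext fun x => by simp [Function.comp])
  set ψd : ℝ → P.carrier := fun t => φd (e1.symm t) with hψd_def
  set ψa : ℝ → P.carrier := fun t => φa (e1.symm t) with hψa_def
  have hψdL : ∀ t, pL (ψd t) = t := fun t => by
    simpa using congrFun hφdL (e1.symm t)
  have hψdR : ∀ t, pR (ψd t) = t := fun t => by
    simpa using congrFun hφdR (e1.symm t)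
  have hψaL : ∀ t, pL (ψa t) = t := fun t => by
    simpa using congrFun hφaL (e1.symm t)
  have hψaR : ∀ t, pR (ψa t) = -t := fun t => by
    simpa using congrFun hφaR (e1.symm t)
  have hψdc : Continuous ψd := hφds.continuous.comp e1.symm.continuous
  have hψac : Continuous ψa := hφas.continuous.comp e1.symm.continuous
  set p0 : P.carrier := ψd 0 with hp0_def
  have hp0L : pL p0 = 0 := hψdL 0
  have hp0R : pR p0 = 0 := hψdR 0
  have hp0' : ψa 0 = p0 :=
    (hpoint 0 0 rfl).unique ⟨hψaL 0, by simpa using hψaR 0⟩ ⟨hp0L, hp0R⟩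
  have hsq : ∀ p, (pL p) ^ 2 = (pR p) ^ 2 := fun p => congrFun hcomm p
  have hne : ∀ p : P.carrier, p ≠ p0 → pL p ≠ 0 ∧ pR p ≠ 0 := by
    intro p hp
    constructor
    · intro h
      have h2 : pR p = 0 := by
        have := hsq p; rw [h] at this
        simpa [pow_eq_zero_iff] using this.symm
      exact hp ((hpoint 0 0 rfl).unique ⟨h, h2⟩ ⟨hp0L, hp0R⟩)
    · intro h
      have h2 : pL p = 0 := by
        have := hsq p; rw [h] at this
        simpa [pow_eq_zero_iff] using this
      exact hp ((hpoint 0 0 rfl).unique ⟨h2, h⟩ ⟨hp0L, hp0R⟩)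
  have hxne : ∀ x : P.carrier, pL x ≠ 0 → x ≠ p0 := fun x hx h => hx (by rw [h, hp0L])
  -- the key sign contradiction
  have final : ∀ C : Set P.carrier, IsPreconnected C → (∀ x ∈ C, x ≠ p0) →
      ∀ a b, a ∈ C → b ∈ C →
      ((0 < pL a ∧ pL b < 0) ∨ (0 < pR a ∧ pR b < 0)) → False := by
    intro C hC hCne a b ha hb hab
    rcases hab with ⟨h1, h2⟩ | ⟨h1, h2⟩
    · have := aux_sign hC hpL.continuous.continuousOn
        (fun x hx => (hne x (hCne x hx)).1) ha hb h1
      linarith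
    · have := aux_sign hC hpR.continuous.continuousOn
        (fun x hx => (hne x (hCne x hx)).2) ha hb h1
      linarith
  -- small parameters landing in a given neighborhood of p0
  have getT : ∀ N : Set P.carrier, N ∈ nhds p0 →
      ∃ t : ℝ, 0 < t ∧ ψd t ∈ N ∧ ψd (-t) ∈ N ∧ ψa t ∈ N := by
    intro N hN
    have h1 : ψd ⁻¹' N ∈ nhds (0 : ℝ) :=
      hψdc.continuousAt.preimage_mem_nhds hN
    have h2 : ψa ⁻¹' N ∈ nhds (0 : ℝ) :=
      hψac.continuousAt.preimage_mem_nhds (by rwa [hp0'])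
    obtain ⟨δ, hδ, hball⟩ := Metric.mem_nhds_iff.1 (Filter.inter_mem h1 h2)
    have hmem : ∀ s : ℝ, |s| < δ → ψd s ∈ N ∧ ψa s ∈ N := by
      intro s hs
      exact hball (by rwa [Metric.mem_ball, Real.dist_eq, sub_zero])
    have habs : |δ / 2| < δ := by rw [abs_of_pos (by linarith)]; linarith
    have habs' : |-(δ / 2)| < δ := by rwa [abs_neg]
    exact ⟨δ / 2, by linarith, (hmem _ habs).1, (hmem _ habs').1, (hmem _ habs).2⟩
  -- the chart at p0
  set χ := chartAt (EuclideanSpace ℝ (Fin P.dim)) p0 with hχ_def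
  have hp0src : p0 ∈ χ.source := mem_chart_source _ p0
  set u := χ p0 with hu_def
  have hut : u ∈ χ.target := χ.map_source hp0src
  rcases Nat.lt_or_ge P.dim 2 with hn2 | hn2
  · rcases Nat.lt_or_ge P.dim 1 with hn1 | hn1
    · -- dimension 0
      have hd : P.dim = 0 := by omega
      haveI : IsEmpty (Fin P.dim) := by rw [hd]; infer_instance
      have hss : ∀ a b : EuclideanSpace ℝ (Fin P.dim), a = b := fun a b =>
        PiLp.ext fun i => isEmptyElim i
      have hsrc : χ.source = {p0} := by
        apply Set.eq_singleton_iff_unique_mem.2 ⟨hp0src, ?_⟩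
        intro q hq
        exact χ.injOn hq hp0src (hss _ _)
      have hopen : IsOpen ({p0} : Set P.carrier) := hsrc ▸ χ.open_source
      have hcl : IsClopen (ψd ⁻¹' {p0}) :=
        ⟨isClosed_singleton.preimage hψdc, hopen.preimage hψdc⟩
      rcases isClopen_iff.1 hcl with h | h
      · exact absurd (show (0 : ℝ) ∈ ψd ⁻¹' {p0} from rfl) (by rw [h]; exact notMem_empty 0)
      · have h1 : ψd 1 = p0 := by
          have : (1 : ℝ) ∈ ψd ⁻¹' {p0} := by rw [h]; trivial
          simpa using this
        have h2 := hψdL 1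
        rw [h1, hp0L] at h2
        exact absurd h2 (by norm_num)
    · -- dimension 1
      have hd : P.dim = 1 := by omega
      have e2 : EuclideanSpace ℝ (Fin P.dim) ≃L[ℝ] ℝ :=
        ContinuousLinearEquiv.ofFinrankEq (by simp [finrank_euclideanSpace_fin, hd])
      set u₀ := e2 u with hu0_def
      obtain ⟨ε, hε, hballε⟩ := Metric.isOpen_iff.1
        (e2.toHomeomorph.isOpenMap _ χ.open_target) u₀ ⟨u, hut, rfl⟩
      set N1 : Set P.carrier := χ.source ∩ (fun p => e2 (χ p)) ⁻¹' (ball u₀ ε) with hN1_def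
      have hN1nhds : N1 ∈ nhds p0 := by
        refine Filter.inter_mem (χ.open_source.mem_nhds hp0src) ?_
        exact (e2.continuous.continuousAt.comp (χ.continuousAt hp0src)).preimage_mem_nhds
          (Metric.ball_mem_nhds u₀ hε)
      obtain ⟨t, ht, hx1, hx2, hx3⟩ := getT N1 hN1nhds
      set x₁ := ψd t
      set x₂ := ψd (-t)
      set x₃ := ψa t
      have hx1ne : x₁ ≠ p0 := hxne _ (by rw [hψdL]; exact ht.ne')
      have hx2ne : x₂ ≠ p0 := hxne _ (by rw [hψdL]; intro h; linarith [neg_eq_zero.1 h])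
      have hx3ne : x₃ ≠ p0 := hxne _ (by rw [hψaL]; exact ht.ne')
      have hcne : ∀ x : P.carrier, x ∈ χ.source → x ≠ p0 → e2 (χ x) ≠ u₀ := by
        intro x hxs hxp h
        exact hxp (χ.injOn hxs hp0src (e2.injective h))
      -- connecting two points of `N1` on the same side of `u₀`
      have mk1 : ∀ xA xB : P.carrier, xA ∈ N1 → xB ∈ N1 → xA ≠ p0 → xB ≠ p0 →
          ((u₀ < e2 (χ xA) ∧ u₀ < e2 (χ xB)) ∨ (e2 (χ xA) < u₀ ∧ e2 (χ xB) < u₀)) →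
          ((0 < pL xA ∧ pL xB < 0) ∨ (0 < pR xA ∧ pR xB < 0)) → False := by
        rintro xA xB ⟨hAs, hAb⟩ ⟨hBs, hBb⟩ hAne hBne hside hsgn
        set cA := e2 (χ xA) with hcA
        set cB := e2 (χ xB) with hcB
        set η : ℝ → P.carrier := fun s => χ.symm (e2.symm s) with hη
        have hAabs : |cA - u₀| < ε := by
          have := hAb; rwa [Set.mem_preimage, Metric.mem_ball, Real.dist_eq] at this
        have hBabs : |cB - u₀| < ε := by
          have := hBb; rwa [Set.mem_preimage, Metric.mem_ball, Real.dist_eq] at this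
        have hsubT : ∀ s ∈ Set.uIcc cA cB, e2.symm s ∈ χ.target ∧ s ≠ u₀ := by
          intro s hs
          have hsabs : |s - u₀| < ε := aux_uIcc hAabs hBabs hs
          constructor
          · have hsb : s ∈ ball u₀ ε := by rwa [Metric.mem_ball, Real.dist_eq]
            obtain ⟨y, hy, hys⟩ := hballε hsb
            rw [← hys]
            simpa using hy
          · rw [Set.mem_uIcc] at hs
            rcases hside with ⟨h1, h2⟩ | ⟨h1, h2⟩ <;> rcases hs with ⟨h, h'⟩ | ⟨h, h'⟩ <;>
              intro hc <;> rw [hc] at h h' <;> linarith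
        have hcont : ContinuousOn η (Set.uIcc cA cB) := by
          refine ContinuousOn.comp χ.continuousOn_symm
            e2.symm.continuous.continuousOn ?_
          intro s hs
          exact (hsubT s hs).1
        set C := η '' Set.uIcc cA cB with hC_def
        have hCp : IsPreconnected C := isPreconnected_uIcc.image η hcont
        have hCne : ∀ x ∈ C, x ≠ p0 := by
          rintro x ⟨s, hs, rfl⟩ hxp
          have h1 : χ (η s) = e2.symm s := χ.right_inv (hsubT s hs).1
          rw [hxp] at h1
          exact (hsubT s hs).2 (by rw [hu0_def, hu_def, h1, e2.apply_symm_apply])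
        have hmemA : xA ∈ C := by
          refine ⟨cA, Set.left_mem_uIcc, ?_⟩
          simp only [hη, hcA, e2.symm_apply_apply]
          exact χ.left_inv hAs
        have hmemB : xB ∈ C := by
          refine ⟨cB, Set.right_mem_uIcc, ?_⟩
          simp only [hη, hcB, e2.symm_apply_apply]
          exact χ.left_inv hBs
        exact final C hCp hCne xA xB hmemA hmemB hsgn
      -- now the pigeonhole on three points x₁ (+,+), x₂ (−,−), x₃ (+,−)
      have hc1 := hcne x₁ hx1.1 hx1ne
      have hc2 := hcne x₂ hx2.1 hx2ne
      have hc3 := hcne x₃ hx3.1 hx3ne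
      have hsL1 : pL x₁ = t := hψdL t
      have hsR1 : pR x₁ = t := hψdR t
      have hsL2 : pL x₂ = -t := hψdL (-t)
      have hsL3 : pL x₃ = t := hψaL t
      have hsR3 : pR x₃ = -t := hψaR t
      have pair13 := fun hside => mk1 x₁ x₃ hx1 hx3 hx1ne hx3ne hside
        (Or.inr ⟨by rw [hsR1]; exact ht, by rw [hsR3]; linarith⟩)
      have pair12 := fun hside => mk1 x₁ x₂ hx1 hx2 hx1ne hx2ne hside
        (Or.inl ⟨by rw [hsL1]; exact ht, by rw [hsL2]; linarith⟩)
      have pair32 := fun hside => mk1 x₃ x₂ hx3 hx2 hx3ne hx2ne hside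
        (Or.inl ⟨by rw [hsL3]; exact ht, by rw [hsL2]; linarith⟩)
      rcases lt_or_gt_of_ne hc1 with h1 | h1 <;>
        rcases lt_or_gt_of_ne hc2 with h2 | h2 <;>
        rcases lt_or_gt_of_ne hc3 with h3 | h3
      · exact pair13 (Or.inr ⟨h1, h3⟩)
      · exact pair12 (Or.inr ⟨h1, h2⟩)
      · exact pair13 (Or.inr ⟨h1, h3⟩)
      · exact pair32 (Or.inl ⟨h3, h2⟩)
      · exact pair32 (Or.inr ⟨h3, h2⟩)
      · exact pair13 (Or.inl ⟨h1, h3⟩)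
      · exact pair12 (Or.inl ⟨h1, h2⟩)
      · exact pair13 (Or.inl ⟨h1, h3⟩)
  · -- dimension ≥ 2
    have hrank : 1 < Module.rank ℝ (EuclideanSpace ℝ (Fin P.dim)) := by
      rw [← Module.finrank_eq_rank]
      exact_mod_cast lt_of_lt_of_le (by norm_num)
        (finrank_euclideanSpace_fin (𝕜 := ℝ) (n := P.dim) ▸ hn2)
    obtain ⟨r, hr, hball⟩ := Metric.isOpen_iff.1 χ.open_target u hut
    set N : Set P.carrier := χ.source ∩ χ ⁻¹' (ball u r) with hN_def
    have hNnhds : N ∈ nhds p0 := by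
      refine Filter.inter_mem (χ.open_source.mem_nhds hp0src) ?_
      exact (χ.continuousAt hp0src).preimage_mem_nhds (Metric.ball_mem_nhds u hr)
    obtain ⟨t, ht, hx1, -, hx3⟩ := getT N hNnhds
    set x₁ := ψd t
    set x₃ := ψa t
    have hx1ne : x₁ ≠ p0 := hxne _ (by rw [hψdL]; exact ht.ne')
    have hx3ne : x₃ ≠ p0 := hxne _ (by rw [hψaL]; exact ht.ne')
    set C := χ.symm '' (ball u r \ {u}) with hC_def
    have hCp : IsPreconnected C := by
      refine (aux_ball _ hrank u hr).image _ (χ.continuousOn_symm.mono ?_)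
      exact fun y hy => hball hy.1
    have hCne : ∀ x ∈ C, x ≠ p0 := by
      rintro x ⟨y, ⟨hy, hy'⟩, rfl⟩ hxp
      have h1 : χ (χ.symm y) = y := χ.right_inv (hball hy)
      rw [hxp] at h1
      exact hy' (by rw [mem_singleton_iff, ← h1])
    have hmem : ∀ x : P.carrier, x ∈ N → x ≠ p0 → x ∈ C := by
      rintro x ⟨hxs, hxb⟩ hxp
      refine ⟨χ x, ⟨hxb, ?_⟩, χ.left_inv hxs⟩
      simp only [mem_singleton_iff]
      intro h
      exact hxp (χ.injOn hxs hp0src h)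
    exact final C hCp hCne x₁ x₃ (hmem _ hx1 hx1ne) (hmem _ hx3 hx3ne)
      (Or.inr ⟨by rw [hψdR]; exact ht, by rw [hψaR]; linarith⟩)

/-- The cospan `(x ↦ x², x ↦ x²)` on `ℝ` has no pullback in the category of smooth
manifolds; consequently, the category of smooth manifolds does not have pullbacks. -/
theorem stmt3 :
    (¬ ∃ (P : SmoothMfld) (pL pR : P.carrier → ℝ),
      ContMDiff P.model 𝓘(ℝ, ℝ) (⊤ : ℕ∞) pL ∧ ContMDiff P.model 𝓘(ℝ, ℝ) (⊤ : ℕ∞) pR ∧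
      (fun x : ℝ => x ^ 2) ∘ pL = (fun x : ℝ => x ^ 2) ∘ pR ∧
      ∀ (Q : SmoothMfld) (qL qR : Q.carrier → ℝ),
        ContMDiff Q.model 𝓘(ℝ, ℝ) (⊤ : ℕ∞) qL → ContMDiff Q.model 𝓘(ℝ, ℝ) (⊤ : ℕ∞) qR →
        (fun x : ℝ => x ^ 2) ∘ qL = (fun x : ℝ => x ^ 2) ∘ qR →
        ∃! φ : Q.carrier → P.carrier,
          ContMDiff Q.model P.model (⊤ : ℕ∞) φ ∧ pL ∘ φ = qL ∧ pR ∘ φ = qR) ∧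
    ¬ ∀ (X Y Z : SmoothMfld) (f : X.carrier → Z.carrier) (g : Y.carrier → Z.carrier),
        SmoothMap' X Z f → SmoothMap' Y Z g →
        ∃ (P : SmoothMfld) (pL : P.carrier → X.carrier) (pR : P.carrier → Y.carrier),
          IsSmoothPullback X Y Z P f g pL pR := by
  refine ⟨no_pb, fun H => no_pb ?_⟩
  have hsq : SmoothMap' Q1 Q1 (fun x : Q1.carrier => e1.symm ((e1 x) ^ 2)) := by
    refine contMDiff_iff_contDiff.mpr ?_
    exact (e1.symm : ℝ →L[ℝ] EuclideanSpace ℝ (Fin 1)).contDiff.comp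
      (((e1 : EuclideanSpace ℝ (Fin 1) →L[ℝ] ℝ).contDiff).pow 2)
  obtain ⟨P, pL', pR', hL, hR, hcomm, hup⟩ :=
    H Q1 Q1 Q1 (fun x => e1.symm ((e1 x) ^ 2)) (fun x => e1.symm ((e1 x) ^ 2)) hsq hsq
  refine ⟨P, fun p => e1 (pL' p), fun p => e1 (pR' p),
    e1_smooth.comp hL, e1_smooth.comp hR, ?_, ?_⟩
  · funext p
    have h := congrFun hcomm p
    simp only [Function.comp] at h ⊢
    exact e1.symm.injective h
  · intro Q qL qR hqL hqR hc
    obtain ⟨φ, ⟨hφs, hφL, hφR⟩, hφu⟩ :=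
      hup Q (fun x => e1.symm (qL x)) (fun x => e1.symm (qR x))
        (e1_symm_smooth.comp hqL) (e1_symm_smooth.comp hqR)
        (funext fun x => by
          have h := congrFun hc x
          simp only [Function.comp] at h ⊢
          rw [e1.apply_symm_apply, e1.apply_symm_apply, h])
    refine ⟨φ, ⟨hφs, funext fun x => ?_, funext fun x => ?_⟩, ?_⟩
    · have h := congrFun hφL x
      simp only [Function.comp] at h ⊢
      rw [h, e1.apply_symm_apply]
    · have h := congrFun hφR x
      simp only [Function.comp] at h ⊢
      rw [h, e1.apply_symm_apply]
    · rintro ψ ⟨hψs, hψL, hψR⟩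
      refine hφu ψ ⟨hψs, funext fun x => ?_, funext fun x => ?_⟩
      · have h := congrFun hψL x
        simp only [Function.comp] at h ⊢
        rw [← h, e1.symm_apply_apply]
      · have h := congrFun hψR x
        simp only [Function.comp] at h ⊢
        rw [← h, e1.symm_apply_apply]
end

section
/- Let F : C → C' be a span tight functor. For i = 1, 2 let Sⁱ and Qⁱ be spans in C with Sⁱ_R = Qⁱ_L, and let Sⁱ ∘_{Pⁱ} Qⁱ be an F-pullback composite along an F-pullback Pⁱ of the cospan (sⁱ_R, qⁱ_L). If S¹ is span isomorphic to S² and Q¹ is span isomorphic to Q², then S¹ ∘_{P¹} Q¹ is span isomorphic to S² ∘_{P²} Q². -/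
open CategoryTheory

universe v u v' u'

/-- A span in `C` with left foot `L` and right foot `R`. -/
structure Span' (C : Type u) [Category.{v} C] (L R : C) where
  apex : C
  left : apex ⟶ L
  right : apex ⟶ R

/-- A cospan in `C` with left foot `L` and right foot `R`. -/
structure Cospan' (C : Type u) [Category.{v} C] (L R : C) where
  coapex : C
  left : L ⟶ coapex
  right : R ⟶ coapex

variable {C : Type u} [Category.{v} C] {C' : Type u'} [Category.{v'} C']

/-- A span is paired with a cospan with the same feet if the resulting square commutes. -/
def PairedWith {L R : C} (S : Span' C L R) (c : Cospan' C L R) : Prop :=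
  S.left ≫ c.left = S.right ≫ c.right

/-- A span morphism between spans with the same feet. -/
def IsSpanMorphism {L R : C} (S Q : Span' C L R) (Φ : S.apex ⟶ Q.apex) : Prop :=
  Φ ≫ Q.left = S.left ∧ Φ ≫ Q.right = S.right

/-- A span isomorphism is a span morphism that is an isomorphism. -/
def IsSpanIso {L R : C} (S Q : Span' C L R) (Φ : S.apex ⟶ Q.apex) : Prop :=
  IsSpanMorphism S Q Φ ∧ IsIso Φ

/-- Two spans are span isomorphic if there is a span isomorphism between them. -/
def SpanIsomorphic {L R : C} (S Q : Span' C L R) : Prop :=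
  ∃ Φ : S.apex ⟶ Q.apex, IsSpanIso S Q Φ

/-- A span `S` is a pullback of a cospan `c` if it is paired with `c` and every span paired
with `c` admits a unique span morphism to `S`. -/
def IsPullbackSpan {L R : C} (S : Span' C L R) (c : Cospan' C L R) : Prop :=
  PairedWith S c ∧ ∀ Q : Span' C L R, PairedWith Q c → ∃! Φ : Q.apex ⟶ S.apex, IsSpanMorphism Q S Φ

/-- The image of a span under a functor. -/
def Span'.map (F : C ⥤ C') {L R : C} (S : Span' C L R) : Span' C' (F.obj L) (F.obj R) :=
  ⟨F.obj S.apex, F.map S.left, F.map S.right⟩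

/-- The image of a cospan under a functor. -/
def Cospan'.map (F : C ⥤ C') {L R : C} (c : Cospan' C L R) : Cospan' C' (F.obj L) (F.obj R) :=
  ⟨F.obj c.coapex, F.map c.left, F.map c.right⟩

/-- A span `S` in `C` is an `F`-pullback of a cospan `c` in `C` if `S` is paired with `c` and
`F(S)` is a pullback of `F(c)` in `C'`. -/
def IsFPullback (F : C ⥤ C') {L R : C} (S : Span' C L R) (c : Cospan' C L R) : Prop :=
  PairedWith S c ∧ IsPullbackSpan (S.map F) (c.map F)

/-- `C` has `F`-pullbacks in `C'`. -/
def HasFPullbacks (F : C ⥤ C') : Prop :=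
  ∀ {L R : C} (c : Cospan' C L R), ∃ S : Span' C L R, IsFPullback F S c

/-- `F` is span tight: `C` has `F`-pullbacks in `C'` and every span isomorphism in `C'`
between the images of two `F`-pullbacks of the same cospan lifts to a span isomorphism in `C`. -/
def SpanTight (F : C ⥤ C') : Prop :=
  HasFPullbacks F ∧ ∀ {L R : C} (c : Cospan' C L R) (S Q : Span' C L R),
    IsFPullback F S c → IsFPullback F Q c →
    ∀ Φ : (S.map F).apex ⟶ (Q.map F).apex, IsSpanIso (S.map F) (Q.map F) Φ →
      ∃ Ψ : S.apex ⟶ Q.apex, IsSpanIso S Q Ψ ∧ F.map Ψ = Φ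

/-- The cospan `(s_R, q_L)` associated to two composable spans. -/
def compCospan {L M R : C} (S : Span' C L M) (Q : Span' C M R) : Cospan' C S.apex Q.apex :=
  ⟨M, S.right, Q.left⟩

/-- The composite of the spans `S` and `Q` along a span `P` paired with `(s_R, q_L)`. -/
def compositeAlong {L M R : C} (S : Span' C L M) (Q : Span' C M R)
    (P : Span' C S.apex Q.apex) : Span' C L R :=
  ⟨P.apex, P.left ≫ S.left, P.right ≫ Q.right⟩

/-- The identity span on an object. -/
def idSpan (X : C) : Span' C X X := ⟨X, 𝟙 X, 𝟙 X⟩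


/-- Any two pullback spans of the same cospan are span isomorphic. -/
theorem pbIso {L R : C} (S Q : Span' C L R) (c : Cospan' C L R)
    (hS : IsPullbackSpan S c) (hQ : IsPullbackSpan Q c) :
    ∃ Φ : S.apex ⟶ Q.apex, IsSpanIso S Q Φ := by
  obtain ⟨hSp, hSu⟩ := hS
  obtain ⟨hQp, hQu⟩ := hQ
  obtain ⟨Φ, hΦ, hΦu⟩ := hQu S hSp
  obtain ⟨Ψ, hΨ, hΨu⟩ := hSu Q hQp
  obtain ⟨iS, hiS, hiSu⟩ := hSu S hSp
  obtain ⟨iQ, hiQ, hiQu⟩ := hQu Q hQp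
  have h1 : Φ ≫ Ψ = 𝟙 _ := by
    have e1 := hiSu (Φ ≫ Ψ)
      ⟨by rw [Category.assoc, hΨ.1, hΦ.1], by rw [Category.assoc, hΨ.2, hΦ.2]⟩
    have e2 := hiSu (𝟙 _) ⟨Category.id_comp _, Category.id_comp _⟩
    rw [e1, e2]
  have h2 : Ψ ≫ Φ = 𝟙 _ := by
    have e1 := hiQu (Ψ ≫ Φ)
      ⟨by rw [Category.assoc, hΦ.1, hΨ.1], by rw [Category.assoc, hΦ.2, hΨ.2]⟩
    have e2 := hiQu (𝟙 _) ⟨Category.id_comp _, Category.id_comp _⟩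
    rw [e1, e2]
  exact ⟨Φ, ⟨hΦ.1, hΦ.2⟩, ⟨Ψ, h1, h2⟩⟩

/-- Transport of a pullback span along isomorphisms of the feet. -/
theorem pbTransport {A A' B B' : C} (T : Span' C A B) (c : Cospan' C A B)
    (h : IsPullbackSpan T c) (α : A' ⟶ A) (β : B' ⟶ B) [IsIso α] [IsIso β] :
    IsPullbackSpan ⟨T.apex, T.left ≫ inv α, T.right ≫ inv β⟩
      ⟨c.coapex, α ≫ c.left, β ≫ c.right⟩ := by
  obtain ⟨hp, hu⟩ := h
  constructor
  · show (T.left ≫ inv α) ≫ α ≫ c.left = (T.right ≫ inv β) ≫ β ≫ c.right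
    simp [hp, PairedWith] at *
    exact hp
  · intro Q hQ
    have hQ' : PairedWith (⟨Q.apex, Q.left ≫ α, Q.right ≫ β⟩ : Span' C A B) c := by
      have := hQ
      simp only [PairedWith] at this ⊢
      simpa using this
    obtain ⟨Φ, hΦ, hΦu⟩ := hu ⟨Q.apex, Q.left ≫ α, Q.right ≫ β⟩ hQ'
    refine ⟨Φ, ⟨?_, ?_⟩, ?_⟩
    · have := hΦ.1
      simp only [] at this
      rw [← Category.assoc, this]
      simp
    · have := hΦ.2
      simp only [] at this
      rw [← Category.assoc, this]
      simp
    · intro y hy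
      refine hΦu y ⟨?_, ?_⟩
      · have := hy.1
        simp only [] at this ⊢
        rw [← this]; simp
      · have := hy.2
        simp only [] at this ⊢
        rw [← this]; simp

/-- `F`-pullback composites of span isomorphic spans are span isomorphic. -/
theorem stmt8 (F : C ⥤ C') (hF : SpanTight F) {L M R : C}
    (S1 S2 : Span' C L M) (Q1 Q2 : Span' C M R)
    (P1 : Span' C S1.apex Q1.apex) (P2 : Span' C S2.apex Q2.apex)
    (hP1 : IsFPullback F P1 (compCospan S1 Q1)) (hP2 : IsFPullback F P2 (compCospan S2 Q2))
    (hS : SpanIsomorphic S1 S2) (hQ : SpanIsomorphic Q1 Q2) :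
    SpanIsomorphic (compositeAlong S1 Q1 P1) (compositeAlong S2 Q2 P2) := by
  obtain ⟨φS, hφSm, hφSi⟩ := hS
  obtain ⟨φQ, hφQm, hφQi⟩ := hQ
  haveI := hφSi
  haveI := hφQi
  -- transported span P2' over the cospan of S1, Q1
  set P2' : Span' C S1.apex Q1.apex :=
    ⟨P2.apex, P2.left ≫ inv φS, P2.right ≫ inv φQ⟩ with hP2'def
  have hφSr : S2.right = inv φS ≫ S1.right := by
    rw [← hφSm.2]; simp
  have hφQl : Q2.left = inv φQ ≫ Q1.left := by
    rw [← hφQm.1]; simp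
  have hpaired : PairedWith P2' (compCospan S1 Q1) := by
    show (P2.left ≫ inv φS) ≫ S1.right = (P2.right ≫ inv φQ) ≫ Q1.left
    have := hP2.1
    simp only [PairedWith, compCospan] at this
    rw [Category.assoc, Category.assoc, ← hφSr, ← hφQl]
    exact this
  -- F(P2') is a pullback of F(compCospan S1 Q1)
  have hcoeq : (compCospan S1 Q1).map F =
      ⟨F.obj M, F.map φS ≫ F.map S2.right, F.map φQ ≫ F.map Q2.left⟩ := by
    simp only [Cospan'.map, compCospan, Cospan'.mk.injEq, heq_eq_eq]
    refine ⟨trivial, ?_, ?_⟩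
    · rw [← F.map_comp, hφSm.2]
    · rw [← F.map_comp, hφQm.1]
  have hspeq : P2'.map F =
      ⟨F.obj P2.apex, F.map P2.left ≫ inv (F.map φS), F.map P2.right ≫ inv (F.map φQ)⟩ := by
    simp only [Span'.map, hP2'def, Span'.mk.injEq, heq_eq_eq]
    exact ⟨trivial, by simp [P2'], by simp [P2']⟩
  have hP2'pb : IsPullbackSpan (P2'.map F) ((compCospan S1 Q1).map F) := by
    rw [hcoeq, hspeq]
    have hc2 : (compCospan S2 Q2).map F =
        (⟨F.obj M, F.map S2.right, F.map Q2.left⟩ : Cospan' C' _ _) := rfl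
    have := pbTransport (P2.map F) ((compCospan S2 Q2).map F) hP2.2
      (F.map φS) (F.map φQ)
    rw [hc2] at this
    exact this
  have hP2'F : IsFPullback F P2' (compCospan S1 Q1) := ⟨hpaired, hP2'pb⟩
  -- the two F-pullbacks of the same cospan give a span iso downstairs, lift it
  obtain ⟨Φ, hΦ⟩ := pbIso (P1.map F) (P2'.map F) ((compCospan S1 Q1).map F) hP1.2 hP2'pb
  obtain ⟨Ψ, hΨiso, -⟩ := hF.2 (compCospan S1 Q1) P1 P2' hP1 hP2'F Φ hΦ
  obtain ⟨⟨hΨl, hΨr⟩, hΨi⟩ := hΨiso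
  refine ⟨Ψ, ⟨?_, ?_⟩, hΨi⟩
  · show Ψ ≫ P2.left ≫ S2.left = P1.left ≫ S1.left
    have h1 : Ψ ≫ P2.left ≫ inv φS = P1.left := hΨl
    have h2 : Ψ ≫ P2.left = P1.left ≫ φS := by
      calc Ψ ≫ P2.left = (Ψ ≫ P2.left ≫ inv φS) ≫ φS := by simp
        _ = P1.left ≫ φS := by rw [h1]
    rw [← Category.assoc, h2, Category.assoc, hφSm.1]
  · show Ψ ≫ P2.right ≫ Q2.right = P1.right ≫ Q1.right
    have h1 : Ψ ≫ P2.right ≫ inv φQ = P1.right := hΨr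
    have h2 : Ψ ≫ P2.right = P1.right ≫ φQ := by
      calc Ψ ≫ P2.right = (Ψ ≫ P2.right ≫ inv φQ) ≫ φQ := by simp
        _ = P1.right ≫ φQ := by rw [h1]
    rw [← Category.assoc, h2, Category.assoc, hφQm.2]
end

section
/- Let F : C → C' be a span tight functor and let S, Q, T be spans in C with S_R = Q_L and Q_R = T_L. Suppose S ∘_{P¹} Q and Q ∘_{P⁴} T are F-pullback composites, and (S ∘_{P¹} Q) ∘_{P²} T and S ∘_{P³} (Q ∘_{P⁴} T) are F-pullback composites. Then (S ∘_{P¹} Q) ∘_{P²} T is span isomorphic in C to S ∘_{P³} (Q ∘_{P⁴} T). -/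
open CategoryTheory

universe v u v' u'

variable {C : Type u} [Category.{v} C] {C' : Type u'} [Category.{v'} C']

section AuxStmt9

variable {D : Type*} [Category D]

/-- Any two pullbacks of the same cospan are span isomorphic. -/
lemma spanIso_of_pullbacks' {L R : D} (c : Cospan' D L R) (S Q : Span' D L R)
    (hS : IsPullbackSpan S c) (hQ : IsPullbackSpan Q c) :
    ∃ Φ : S.apex ⟶ Q.apex, IsSpanIso S Q Φ := by
  obtain ⟨Φ, hΦ, -⟩ := hQ.2 S hS.1
  obtain ⟨Ψ, hΨ, -⟩ := hS.2 Q hQ.1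
  obtain ⟨i, -, hiu⟩ := hS.2 S hS.1
  obtain ⟨j, -, hju⟩ := hQ.2 Q hQ.1
  have h1 : Φ ≫ Ψ = 𝟙 _ := by
    rw [hiu (Φ ≫ Ψ) ⟨by rw [Category.assoc, hΨ.1, hΦ.1], by rw [Category.assoc, hΨ.2, hΦ.2]⟩,
        hiu (𝟙 _) ⟨Category.id_comp _, Category.id_comp _⟩]
  have h2 : Ψ ≫ Φ = 𝟙 _ := by
    rw [hju (Ψ ≫ Φ) ⟨by rw [Category.assoc, hΦ.1, hΨ.1], by rw [Category.assoc, hΦ.2, hΨ.2]⟩,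
        hju (𝟙 _) ⟨Category.id_comp _, Category.id_comp _⟩]
  exact ⟨Φ, hΦ, ⟨Ψ, h1, h2⟩⟩

/-- Right pasting of pullbacks. -/
lemma paste_right' {X Y Z U : D} (f : X ⟶ Y) (g : Y ⟶ Z) (h : U ⟶ Z)
    (P : Span' D Y U) (hP : IsPullbackSpan P ⟨Z, g, h⟩)
    (W : Span' D X P.apex) (hW : IsPullbackSpan W ⟨Y, f, P.left⟩) :
    IsPullbackSpan ⟨W.apex, W.left, W.right ≫ P.right⟩ ⟨Z, f ≫ g, h⟩ := by
  have hWp : W.left ≫ f = W.right ≫ P.left := hW.1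
  have hPp : P.left ≫ g = P.right ≫ h := hP.1
  constructor
  · show W.left ≫ f ≫ g = (W.right ≫ P.right) ≫ h
    rw [← Category.assoc, hWp, Category.assoc, hPp, ← Category.assoc]
  · intro V hV
    replace hV : V.left ≫ f ≫ g = V.right ≫ h := hV
    obtain ⟨α, hα, hαu⟩ := hP.2 ⟨V.apex, V.left ≫ f, V.right⟩
      (show (V.left ≫ f) ≫ g = V.right ≫ h by rw [Category.assoc]; exact hV)
    obtain ⟨β, hβ, hβu⟩ := hW.2 ⟨V.apex, V.left, α⟩
      (show V.left ≫ f = α ≫ P.left from hα.1.symm)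
    refine ⟨β, ⟨hβ.1, ?_⟩, ?_⟩
    · show β ≫ W.right ≫ P.right = V.right
      rw [← Category.assoc, hβ.2]; exact hα.2
    · intro β' hβ'
      have h1 : β' ≫ W.left = V.left := hβ'.1
      have h2 : β' ≫ W.right ≫ P.right = V.right := hβ'.2
      have hα' : β' ≫ W.right = α := by
        refine hαu (β' ≫ W.right) ⟨?_, ?_⟩
        · show (β' ≫ W.right) ≫ P.left = V.left ≫ f
          rw [Category.assoc, ← hWp, ← Category.assoc, h1]
        · show (β' ≫ W.right) ≫ P.right = V.right
          rw [Category.assoc]; exact h2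
      exact hβu β' ⟨h1, hα'⟩

/-- Left pasting of pullbacks. -/
lemma paste_left' {X A Z B : D} (g : A ⟶ Z) (h : B ⟶ Z) (f : X ⟶ B)
    (P : Span' D A B) (hP : IsPullbackSpan P ⟨Z, g, h⟩)
    (W : Span' D P.apex X) (hW : IsPullbackSpan W ⟨B, P.right, f⟩) :
    IsPullbackSpan ⟨W.apex, W.left ≫ P.left, W.right⟩ ⟨Z, g, f ≫ h⟩ := by
  have hWp : W.left ≫ P.right = W.right ≫ f := hW.1
  have hPp : P.left ≫ g = P.right ≫ h := hP.1
  constructor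
  · show (W.left ≫ P.left) ≫ g = W.right ≫ f ≫ h
    rw [Category.assoc, hPp, ← Category.assoc, hWp, Category.assoc]
  · intro V hV
    replace hV : V.left ≫ g = V.right ≫ f ≫ h := hV
    obtain ⟨α, hα, hαu⟩ := hP.2 ⟨V.apex, V.left, V.right ≫ f⟩
      (show V.left ≫ g = (V.right ≫ f) ≫ h by rw [Category.assoc]; exact hV)
    obtain ⟨β, hβ, hβu⟩ := hW.2 ⟨V.apex, α, V.right⟩
      (show α ≫ P.right = V.right ≫ f from hα.2)
    refine ⟨β, ⟨?_, hβ.2⟩, ?_⟩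
    · show β ≫ W.left ≫ P.left = V.left
      rw [← Category.assoc, hβ.1]; exact hα.1
    · intro β' hβ'
      have h1 : β' ≫ W.left ≫ P.left = V.left := hβ'.1
      have h2 : β' ≫ W.right = V.right := hβ'.2
      have hα' : β' ≫ W.left = α := by
        refine hαu (β' ≫ W.left) ⟨?_, ?_⟩
        · show (β' ≫ W.left) ≫ P.left = V.left
          rw [Category.assoc]; exact h1
        · show (β' ≫ W.left) ≫ P.right = V.right ≫ f
          rw [Category.assoc, hWp, ← Category.assoc, h2]
      exact hβu β' ⟨hα', h2⟩

end AuxStmt9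

/-- Associativity of `F`-pullback composition up to span isomorphism. -/
theorem stmt9 (F : C ⥤ C') (hF : SpanTight F) {L M1 M2 R : C}
    (S : Span' C L M1) (Q : Span' C M1 M2) (T : Span' C M2 R)
    (P1 : Span' C S.apex Q.apex) (hP1 : IsFPullback F P1 (compCospan S Q))
    (P4 : Span' C Q.apex T.apex) (hP4 : IsFPullback F P4 (compCospan Q T))
    (P2 : Span' C (compositeAlong S Q P1).apex T.apex)
    (hP2 : IsFPullback F P2 (compCospan (compositeAlong S Q P1) T))
    (P3 : Span' C S.apex (compositeAlong Q T P4).apex)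
    (hP3 : IsFPullback F P3 (compCospan S (compositeAlong Q T P4))) :
    SpanIsomorphic (compositeAlong (compositeAlong S Q P1) T P2)
      (compositeAlong S (compositeAlong Q T P4) P3) := by
  -- Take an F-pullback W of the cospan (P1.right, P4.left)
  obtain ⟨W, hW⟩ := hF.1 (⟨Q.apex, P1.right, P4.left⟩ : Cospan' C P1.apex P4.apex)
  have hWp : W.left ≫ P1.right = W.right ≫ P4.left := hW.1
  have hP1p : P1.left ≫ S.right = P1.right ≫ Q.left := hP1.1
  have hP4p : P4.left ≫ Q.right = P4.right ≫ T.left := hP4.1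
  -- A : F-pullback of compCospan (S∘Q) T with apex W.apex
  set A : Span' C (compositeAlong S Q P1).apex T.apex :=
    ⟨W.apex, W.left, W.right ≫ P4.right⟩ with hAdef
  have hA : IsFPullback F A (compCospan (compositeAlong S Q P1) T) := by
    constructor
    · show W.left ≫ P1.right ≫ Q.right = (W.right ≫ P4.right) ≫ T.left
      rw [← Category.assoc, hWp, Category.assoc, hP4p, ← Category.assoc]
    · have := paste_right' (F.map P1.right) (F.map Q.right) (F.map T.left)
        (P4.map F) hP4.2 (W.map F) hW.2
      have e1 : (A.map F) =
          (⟨(W.map F).apex, (W.map F).left, (W.map F).right ≫ (P4.map F).right⟩ :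
            Span' C' _ _) := by
        simp [Span'.map, Cospan'.map, Functor.map_comp, A]
        rfl
      have e2 : ((compCospan (compositeAlong S Q P1) T).map F) =
          (⟨F.obj M2, F.map P1.right ≫ F.map Q.right, F.map T.left⟩ :
            Cospan' C' _ _) := by
        simp [Span'.map, Cospan'.map, compCospan, compositeAlong, Functor.map_comp]
      rw [e1, e2]
      exact this
  -- B : F-pullback of compCospan S (Q∘T) with apex W.apex
  set B : Span' C S.apex (compositeAlong Q T P4).apex :=
    ⟨W.apex, W.left ≫ P1.left, W.right⟩ with hBdef
  have hB : IsFPullback F B (compCospan S (compositeAlong Q T P4)) := by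
    constructor
    · show (W.left ≫ P1.left) ≫ S.right = W.right ≫ P4.left ≫ Q.left
      rw [Category.assoc, hP1p, ← Category.assoc, hWp, Category.assoc]
    · have := paste_left' (F.map S.right) (F.map Q.left) (F.map P4.left)
        (P1.map F) hP1.2 (W.map F) hW.2
      have e1 : (B.map F) =
          (⟨(W.map F).apex, (W.map F).left ≫ (P1.map F).left, (W.map F).right⟩ :
            Span' C' _ _) := by
        simp [Span'.map, Cospan'.map, Functor.map_comp, B]
        rfl
      have e2 : ((compCospan S (compositeAlong Q T P4)).map F) =
          (⟨F.obj M1, F.map S.right, F.map P4.left ≫ F.map Q.left⟩ :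
            Cospan' C' _ _) := by
        simp [Span'.map, Cospan'.map, compCospan, compositeAlong, Functor.map_comp]
      rw [e1, e2]
      exact this
  -- lift the span isos via tightness
  obtain ⟨Φ, hΦ⟩ := spanIso_of_pullbacks' _ (P2.map F) (A.map F) hP2.2 hA.2
  obtain ⟨Ψ, hΨ, -⟩ := hF.2 _ P2 A hP2 hA Φ hΦ
  obtain ⟨Φ', hΦ'⟩ := spanIso_of_pullbacks' _ (B.map F) (P3.map F) hB.2 hP3.2
  obtain ⟨Ψ', hΨ', -⟩ := hF.2 _ B P3 hB hP3 Φ' hΦ'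
  have hΨ1 : Ψ ≫ W.left = P2.left := hΨ.1.1
  have hΨ2 : Ψ ≫ W.right ≫ P4.right = P2.right := hΨ.1.2
  have hΨ'1 : Ψ' ≫ P3.left = W.left ≫ P1.left := hΨ'.1.1
  have hΨ'2 : Ψ' ≫ P3.right = W.right := hΨ'.1.2
  have i1 : IsIso Ψ := hΨ.2
  have i2 : IsIso Ψ' := hΨ'.2
  refine ⟨Ψ ≫ Ψ', ⟨?_, ?_⟩, IsIso.comp_isIso' i1 i2⟩
  · show (Ψ ≫ Ψ') ≫ P3.left ≫ S.left = P2.left ≫ P1.left ≫ S.left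
    rw [Category.assoc, ← Category.assoc Ψ', hΨ'1, ← hΨ1]
    exact (congrArg (Ψ ≫ ·) (Category.assoc _ _ _)).trans (Category.assoc _ _ _).symm
  · show (Ψ ≫ Ψ') ≫ P3.right ≫ P4.right ≫ T.right = P2.right ≫ T.right
    rw [Category.assoc, ← Category.assoc Ψ', hΨ'2, ← hΨ2]
    exact ((Category.assoc _ _ _).trans (congrArg (Ψ ≫ ·) (Category.assoc _ _ _))).symm
end

section
/- Let F : C → C' be a span tight functor. Then there is a category Span(C, F) whose objects are the objects of C, whose morphisms from X to Y are span-isomorphism classes [S] of spans S in C with S_R = X and S_L = Y, whose composition is defined by [S] ∘ [Q] = [S ∘_P Q] for any F-pullback composite S ∘_P Q of representatives, and whose identity on an object X is the class of the span (Id_X, Id_X). That is: composition is well defined (independent of the chosen representatives and of the chosen F-pullback), it satisfies the left and right unit laws with the identity spans, and it is associative. -/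
open CategoryTheory

universe v u v' u'

variable {C : Type u} [Category.{v} C] {C' : Type u'} [Category.{v'} C']

section Aux

variable {D : Type*} [Category D]

lemma spanIso_symm {L R : D} {S Q : Span' D L R} (h : SpanIsomorphic S Q) :
    SpanIsomorphic Q S := by
  obtain ⟨Φ, ⟨h1, h2⟩, hiso⟩ := h
  haveI := hiso
  refine ⟨inv Φ, ⟨?_, ?_⟩, inferInstance⟩
  · rw [← h1, IsIso.inv_hom_id_assoc]
  · rw [← h2, IsIso.inv_hom_id_assoc]

lemma spanIso_trans {L R : D} {S Q T : Span' D L R} (h : SpanIsomorphic S Q)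
    (h' : SpanIsomorphic Q T) : SpanIsomorphic S T := by
  obtain ⟨Φ, ⟨a1, a2⟩, hΦ⟩ := h
  obtain ⟨Ψ, ⟨b1, b2⟩, hΨ⟩ := h'
  haveI := hΦ; haveI := hΨ
  exact ⟨Φ ≫ Ψ, ⟨by rw [Category.assoc, b1, a1], by rw [Category.assoc, b2, a2]⟩,
    inferInstance⟩

/-- Any two pullback spans of the same cospan are span isomorphic. -/
lemma pullbackSpan_iso {L R : D} {S Q : Span' D L R} {c : Cospan' D L R}
    (hS : IsPullbackSpan S c) (hQ : IsPullbackSpan Q c) :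
    ∃ Φ : S.apex ⟶ Q.apex, IsSpanIso S Q Φ := by
  obtain ⟨Φ, hΦ, -⟩ := hQ.2 S hS.1
  obtain ⟨Ψ, hΨ, -⟩ := hS.2 Q hQ.1
  have hSS := hS.2 S hS.1
  have hQQ := hQ.2 Q hQ.1
  have e1 : Φ ≫ Ψ = 𝟙 _ :=
    hSS.unique ⟨by rw [Category.assoc, hΨ.1, hΦ.1], by rw [Category.assoc, hΨ.2, hΦ.2]⟩
      ⟨Category.id_comp _, Category.id_comp _⟩
  have e2 : Ψ ≫ Φ = 𝟙 _ :=
    hQQ.unique ⟨by rw [Category.assoc, hΦ.1, hΨ.1], by rw [Category.assoc, hΦ.2, hΨ.2]⟩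
      ⟨Category.id_comp _, Category.id_comp _⟩
  exact ⟨Φ, hΦ, ⟨Ψ, e1, e2⟩⟩

/-- Two `F`-pullbacks of the same cospan are span isomorphic, when `F` is span tight. -/
lemma fpullback_spanIso {F : C ⥤ C'} (hF : SpanTight F) {L R : C} {c : Cospan' C L R}
    {S Q : Span' C L R} (hS : IsFPullback F S c) (hQ : IsFPullback F Q c) :
    SpanIsomorphic S Q := by
  obtain ⟨Φ, hΦ⟩ := pullbackSpan_iso hS.2 hQ.2
  obtain ⟨Ψ, hΨ, -⟩ := hF.2 c S Q hS hQ Φ hΦ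
  exact ⟨Ψ, hΨ⟩

/-- Transport of a pullback span along isomorphisms of the cospan legs. -/
lemma pullback_transport {A B A' B' M : D} (f : A' ⟶ M) (g : B' ⟶ M)
    (φ : A ⟶ A') (ψ : B ⟶ B') [IsIso φ] [IsIso ψ] {P : Span' D A B}
    (hP : IsPullbackSpan P ⟨M, φ ≫ f, ψ ≫ g⟩) :
    IsPullbackSpan ⟨P.apex, P.left ≫ φ, P.right ≫ ψ⟩ ⟨M, f, g⟩ := by
  constructor
  · have h := hP.1
    simp only [PairedWith] at h ⊢
    simpa only [Category.assoc] using h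
  · rintro Z hZ
    simp only [PairedWith] at hZ
    have hZ' : PairedWith (⟨Z.apex, Z.left ≫ inv φ, Z.right ≫ inv ψ⟩ : Span' D A B)
        ⟨M, φ ≫ f, ψ ≫ g⟩ := by
      simp only [PairedWith]
      simp [hZ]
    obtain ⟨θ, ⟨t1, t2⟩, tu⟩ := hP.2 _ hZ'
    simp only [IsSpanMorphism] at t1 t2 ⊢
    refine ⟨θ, ⟨?_, ?_⟩, ?_⟩
    · rw [← Category.assoc, t1]
      simp
    · rw [← Category.assoc, t2]
      simp
    · rintro θ' ⟨u1, u2⟩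
      try dsimp at u1 u2
      apply tu
      constructor
      · dsimp
        rw [← u1]
        simp
      · dsimp
        rw [← u2]
        simp

/-- Pasting of pullback spans (right-handed version). -/
lemma pullback_paste {A B T M : D} (q : B ⟶ M) (t : T ⟶ M) (r : A ⟶ B)
    {P4 : Span' D B T} (h4 : IsPullbackSpan P4 ⟨M, q, t⟩)
    {P5 : Span' D A P4.apex} (h5 : IsPullbackSpan P5 ⟨B, r, P4.left⟩) :
    IsPullbackSpan ⟨P5.apex, P5.left, P5.right ≫ P4.right⟩ ⟨M, r ≫ q, t⟩ := by
  have e4 := h4.1; have e5 := h5.1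
  simp only [PairedWith] at e4 e5
  constructor
  · simp only [PairedWith]
    try dsimp
    rw [← Category.assoc, e5, Category.assoc, e4, Category.assoc]
  · rintro Z hZ
    simp only [PairedWith] at hZ
    try dsimp at hZ
    have hu : PairedWith (⟨Z.apex, Z.left ≫ r, Z.right⟩ : Span' D B T) ⟨M, q, t⟩ := by
      simp only [PairedWith]
      try dsimp
      rw [Category.assoc]
      exact hZ
    obtain ⟨u, ⟨u1, u2⟩, uu⟩ := h4.2 _ hu
    try dsimp at u1 u2
    have hv : PairedWith (⟨Z.apex, Z.left, u⟩ : Span' D A P4.apex) ⟨B, r, P4.left⟩ := by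
      simp only [PairedWith]
      try dsimp
      exact u1.symm
    obtain ⟨v, ⟨v1, v2⟩, vv⟩ := h5.2 _ hv
    try dsimp at v1 v2
    refine ⟨v, ⟨?_, ?_⟩, ?_⟩
    · exact v1
    · show v ≫ (P5.right ≫ P4.right) = Z.right
      rw [← Category.assoc, v2, u2]
    · rintro v' ⟨w1, w2⟩
      try dsimp at w1 w2
      have hu' : v' ≫ P5.right = u := by
        apply uu
        constructor
        · show (v' ≫ P5.right) ≫ P4.left = Z.left ≫ r
          rw [Category.assoc, ← e5, ← Category.assoc, w1]
        · show (v' ≫ P5.right) ≫ P4.right = Z.right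
          rw [Category.assoc]
          exact w2
      exact vv v' ⟨w1, hu'⟩

/-- Pasting of pullback spans (left-handed version). -/
lemma pullback_paste' {S B T M : D} (s : S ⟶ M) (q : B ⟶ M) (r : T ⟶ B)
    {P1 : Span' D S B} (h1 : IsPullbackSpan P1 ⟨M, s, q⟩)
    {P5 : Span' D P1.apex T} (h5 : IsPullbackSpan P5 ⟨B, P1.right, r⟩) :
    IsPullbackSpan ⟨P5.apex, P5.left ≫ P1.left, P5.right⟩ ⟨M, s, r ≫ q⟩ := by
  have e1 := h1.1; have e5 := h5.1
  simp only [PairedWith] at e1 e5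
  constructor
  · simp only [PairedWith]
    try dsimp
    rw [Category.assoc, e1, ← Category.assoc, e5, Category.assoc]
  · rintro Z hZ
    simp only [PairedWith] at hZ
    try dsimp at hZ
    have hu : PairedWith (⟨Z.apex, Z.left, Z.right ≫ r⟩ : Span' D S B) ⟨M, s, q⟩ := by
      simp only [PairedWith]
      try dsimp
      rw [Category.assoc]
      exact hZ
    obtain ⟨u, ⟨u1, u2⟩, uu⟩ := h1.2 _ hu
    try dsimp at u1 u2
    have hv : PairedWith (⟨Z.apex, u, Z.right⟩ : Span' D P1.apex T) ⟨B, P1.right, r⟩ := by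
      simp only [PairedWith]
      try dsimp
      exact u2
    obtain ⟨v, ⟨v1, v2⟩, vv⟩ := h5.2 _ hv
    try dsimp at v1 v2
    refine ⟨v, ⟨?_, ?_⟩, ?_⟩
    · show v ≫ (P5.left ≫ P1.left) = Z.left
      rw [← Category.assoc, v1, u1]
    · exact v2
    · rintro v' ⟨w1, w2⟩
      try dsimp at w1 w2
      have hu' : v' ≫ P5.left = u := by
        apply uu
        constructor
        · show (v' ≫ P5.left) ≫ P1.left = Z.left
          rw [Category.assoc]
          exact w1
        · show (v' ≫ P5.left) ≫ P1.right = Z.right ≫ r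
          rw [Category.assoc, e5, ← Category.assoc, w2]
      exact vv v' ⟨hu', w2⟩

/-- A span isomorphism of pullback spans induces a span isomorphism of composites. -/
lemma composite_congr {L M R : C} (S : Span' C L M) (Q : Span' C M R)
    {P P' : Span' C S.apex Q.apex} (h : SpanIsomorphic P P') :
    SpanIsomorphic (compositeAlong S Q P) (compositeAlong S Q P') := by
  obtain ⟨Φ, ⟨h1, h2⟩, hi⟩ := h
  refine ⟨Φ, ⟨?_, ?_⟩, hi⟩
  · show Φ ≫ (P'.left ≫ S.left) = P.left ≫ S.left
    rw [← Category.assoc, h1]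
  · show Φ ≫ (P'.right ≫ Q.right) = P.right ≫ Q.right
    rw [← Category.assoc, h2]

end Aux

/-- If `F` is span tight then `Span(C, F)` is a category: composition of isomorphism classes
of spans by `F`-pullback composites is well defined (independent of the chosen representatives
and of the chosen `F`-pullback), satisfies the right and left unit laws with the identity
spans, and is associative. -/
theorem stmt10 (F : C ⥤ C') (hF : SpanTight F) :
    -- composition is well defined on span-isomorphism classes
    (∀ {L M R : C} (S1 S2 : Span' C L M) (Q1 Q2 : Span' C M R)
        (P1 : Span' C S1.apex Q1.apex) (P2 : Span' C S2.apex Q2.apex),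
        IsFPullback F P1 (compCospan S1 Q1) → IsFPullback F P2 (compCospan S2 Q2) →
        SpanIsomorphic S1 S2 → SpanIsomorphic Q1 Q2 →
        SpanIsomorphic (compositeAlong S1 Q1 P1) (compositeAlong S2 Q2 P2)) ∧
    -- right unit law
    (∀ {L R : C} (S : Span' C L R) (P : Span' C S.apex (idSpan R).apex),
        IsFPullback F P (compCospan S (idSpan R)) →
        SpanIsomorphic (compositeAlong S (idSpan R) P) S) ∧
    -- left unit law
    (∀ {L R : C} (S : Span' C L R) (P : Span' C (idSpan L).apex S.apex),
        IsFPullback F P (compCospan (idSpan L) S) →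
        SpanIsomorphic (compositeAlong (idSpan L) S P) S) ∧
    -- associativity
    (∀ {L M1 M2 R : C} (S : Span' C L M1) (Q : Span' C M1 M2) (T : Span' C M2 R)
        (P1 : Span' C S.apex Q.apex), IsFPullback F P1 (compCospan S Q) →
        ∀ P4 : Span' C Q.apex T.apex, IsFPullback F P4 (compCospan Q T) →
        ∀ P2 : Span' C (compositeAlong S Q P1).apex T.apex,
          IsFPullback F P2 (compCospan (compositeAlong S Q P1) T) →
        ∀ P3 : Span' C S.apex (compositeAlong Q T P4).apex,
          IsFPullback F P3 (compCospan S (compositeAlong Q T P4)) →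
        SpanIsomorphic (compositeAlong (compositeAlong S Q P1) T P2)
          (compositeAlong S (compositeAlong Q T P4) P3)) := by
  refine ⟨?wd, ?runit, ?lunit, ?assoc⟩
  -- well-definedness
  · intro L M R S1 S2 Q1 Q2 P1 P2 hP1 hP2 hS hQ
    obtain ⟨Φ, ⟨φ1, φ2⟩, iΦ⟩ := hS
    obtain ⟨Ψ, ⟨ψ1, ψ2⟩, iΨ⟩ := hQ
    haveI := iΦ; haveI := iΨ
    set P1' : Span' C S2.apex Q2.apex := ⟨P1.apex, P1.left ≫ Φ, P1.right ≫ Ψ⟩ with hP1'def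
    have pair1 := hP1.1
    simp only [PairedWith, compCospan] at pair1
    have hP1' : IsFPullback F P1' (compCospan S2 Q2) := by
      constructor
      · simp only [PairedWith, compCospan, hP1'def]
        try dsimp
        rw [Category.assoc, φ2, Category.assoc, ψ1]
        exact pair1
      · have h2 := hP1.2
        simp only [compCospan, Cospan'.map] at h2 ⊢
        rw [← φ2, ← ψ1, F.map_comp, F.map_comp] at h2
        have h3 := pullback_transport (F.map S2.right) (F.map Q2.left)
          (F.map Φ) (F.map Ψ) h2
        simpa only [hP1'def, P1', Span'.map, F.map_comp] using h3
    obtain ⟨Θ, ⟨t1, t2⟩, iΘ⟩ := fpullback_spanIso hF hP1' hP2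
    simp only [hP1'def, P1'] at t1 t2
    try dsimp at t1 t2
    refine ⟨Θ, ⟨?_, ?_⟩, iΘ⟩
    · show Θ ≫ (P2.left ≫ S2.left) = P1.left ≫ S1.left
      rw [← Category.assoc, t1, Category.assoc, φ1]
    · show Θ ≫ (P2.right ≫ Q2.right) = P1.right ≫ Q1.right
      rw [← Category.assoc, t2, Category.assoc, ψ2]
  -- right unit
  · intro L R S P hP
    set P0 : Span' C S.apex (idSpan R).apex := ⟨S.apex, 𝟙 S.apex, S.right⟩ with hP0def
    have hP0 : IsFPullback F P0 (compCospan S (idSpan R)) := by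
      constructor
      · simp only [PairedWith, compCospan, idSpan, hP0def, P0]
        try dsimp
        simp
      · constructor
        · simp only [PairedWith, compCospan, idSpan, Cospan'.map, Span'.map, hP0def, P0]
          try dsimp
          simp
        · rintro Z hZ
          simp only [PairedWith, compCospan, idSpan, Cospan'.map, Span'.map, hP0def] at hZ
          try dsimp at hZ
          simp only [F.map_id, Category.comp_id] at hZ
          refine ⟨Z.left, ⟨?_, ?_⟩, ?_⟩
          · show Z.left ≫ F.map (𝟙 S.apex) = Z.left
            simp
          · show Z.left ≫ F.map S.right = Z.right
            exact hZ
          · rintro θ' ⟨w1, w2⟩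
            simp only [hP0def, P0, Span'.map] at w1
            try dsimp at w1
            exact (Category.comp_id θ').symm.trans ((congrArg (θ' ≫ ·) (F.map_id S.apex)).symm.trans w1)
    obtain ⟨Θ, ⟨t1, t2⟩, iΘ⟩ := fpullback_spanIso hF hP hP0
    simp only [hP0def, P0] at t1 t2
    try dsimp at t1 t2
    rw [Category.comp_id] at t1
    refine ⟨Θ, ⟨?_, ?_⟩, iΘ⟩
    · show Θ ≫ S.left = P.left ≫ S.left
      rw [t1]
    · show Θ ≫ S.right = P.right ≫ (idSpan R).right
      simp only [idSpan]
      exact t2.trans (Category.comp_id _).symm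
  -- left unit
  · intro L R S P hP
    set P0 : Span' C (idSpan L).apex S.apex := ⟨S.apex, S.left, 𝟙 S.apex⟩ with hP0def
    have hP0 : IsFPullback F P0 (compCospan (idSpan L) S) := by
      constructor
      · simp only [PairedWith, compCospan, idSpan, hP0def, P0]
        try dsimp
        simp
      · constructor
        · simp only [PairedWith, compCospan, idSpan, Cospan'.map, Span'.map, hP0def, P0]
          try dsimp
          simp
        · rintro Z hZ
          simp only [PairedWith, compCospan, idSpan, Cospan'.map, Span'.map, hP0def] at hZ
          try dsimp at hZ
          simp only [F.map_id, Category.comp_id] at hZ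
          refine ⟨Z.right, ⟨?_, ?_⟩, ?_⟩
          · show Z.right ≫ F.map S.left = Z.left
            exact hZ.symm
          · show Z.right ≫ F.map (𝟙 S.apex) = Z.right
            simp
          · rintro θ' ⟨w1, w2⟩
            simp only [hP0def, P0, Span'.map] at w2
            try dsimp at w2
            exact (Category.comp_id θ').symm.trans ((congrArg (θ' ≫ ·) (F.map_id S.apex)).symm.trans w2)
    obtain ⟨Θ, ⟨t1, t2⟩, iΘ⟩ := fpullback_spanIso hF hP hP0
    simp only [hP0def, P0] at t1 t2
    try dsimp at t1 t2
    rw [Category.comp_id] at t2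
    refine ⟨Θ, ⟨?_, ?_⟩, iΘ⟩
    · show Θ ≫ S.left = P.left ≫ (idSpan L).left
      simp only [idSpan]
      exact t1.trans (Category.comp_id _).symm
    · show Θ ≫ S.right = P.right ≫ S.right
      rw [t2]
  -- associativity
  · intro L M1 M2 R S Q T P1 hP1 P4 hP4 P2 hP2 P3 hP3
    obtain ⟨P5, hP5⟩ := hF.1 (⟨Q.apex, P1.right, P4.left⟩ : Cospan' C P1.apex P4.apex)
    have e1 := hP1.1; have e4 := hP4.1; have e5 := hP5.1
    simp only [PairedWith, compCospan] at e1 e4 e5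
    try dsimp at e5
    -- the right-handed pasted span
    set W : Span' C (compositeAlong S Q P1).apex T.apex :=
      ⟨P5.apex, P5.left, P5.right ≫ P4.right⟩ with hWdef
    have hW : IsFPullback F W (compCospan (compositeAlong S Q P1) T) := by
      constructor
      · simp only [PairedWith, compCospan, compositeAlong, hWdef]
        try dsimp
        rw [← Category.assoc, e5, Category.assoc, e4, Category.assoc]
      · have h4 : IsPullbackSpan (P4.map F)
            (⟨F.obj M2, F.map Q.right, F.map T.left⟩ : Cospan' C' _ _) := hP4.2
        have h5 : IsPullbackSpan (P5.map F)
            (⟨F.obj Q.apex, F.map P1.right, (P4.map F).left⟩ : Cospan' C' _ _) := hP5.2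
        have h := pullback_paste (F.map Q.right) (F.map T.left) (F.map P1.right) h4 h5
        simpa only [hWdef, W, Span'.map, Cospan'.map, compCospan, compositeAlong,
          F.map_comp] using h
    -- the left-handed pasted span
    set W' : Span' C S.apex (compositeAlong Q T P4).apex :=
      ⟨P5.apex, P5.left ≫ P1.left, P5.right⟩ with hW'def
    have hW' : IsFPullback F W' (compCospan S (compositeAlong Q T P4)) := by
      constructor
      · simp only [PairedWith, compCospan, compositeAlong, hW'def]
        try dsimp
        rw [Category.assoc, e1, ← Category.assoc, e5, Category.assoc]
      · have h1 : IsPullbackSpan (P1.map F)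
            (⟨F.obj M1, F.map S.right, F.map Q.left⟩ : Cospan' C' _ _) := hP1.2
        have h5 : IsPullbackSpan (P5.map F)
            (⟨F.obj Q.apex, (P1.map F).right, F.map P4.left⟩ : Cospan' C' _ _) := hP5.2
        have h := pullback_paste' (F.map S.right) (F.map Q.left) (F.map P4.left) h1 h5
        simpa only [hW'def, W', Span'.map, Cospan'.map, compCospan, compositeAlong,
          F.map_comp] using h
    have i1 : SpanIsomorphic (compositeAlong (compositeAlong S Q P1) T P2)
        (compositeAlong (compositeAlong S Q P1) T W) :=
      composite_congr _ _ (fpullback_spanIso hF hP2 hW)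
    have i3 : SpanIsomorphic (compositeAlong S (compositeAlong Q T P4) W')
        (compositeAlong S (compositeAlong Q T P4) P3) :=
      composite_congr _ _ (fpullback_spanIso hF hW' hP3)
    have i2 : SpanIsomorphic (compositeAlong (compositeAlong S Q P1) T W)
        (compositeAlong S (compositeAlong Q T P4) W') := by
      refine ⟨𝟙 P5.apex, ⟨?_, ?_⟩, IsIso.id _⟩
      · show 𝟙 P5.apex ≫ ((P5.left ≫ P1.left) ≫ S.left) = P5.left ≫ (P1.left ≫ S.left)
        simp
      · show 𝟙 P5.apex ≫ (P5.right ≫ (P4.right ≫ T.right)) = (P5.right ≫ P4.right) ≫ T.right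
        simp
    exact spanIso_trans i1 (spanIso_trans i2 i3)
end

section
/- Let F : C → C' be a span tight functor and let S be a span in C. Then the F-pullback composite of S with the identity span (Id_{S_R}, Id_{S_R}) along any F-pullback of the cospan (s_R, Id_{S_R}) is span isomorphic in C to S; likewise the F-pullback composite of the identity span (Id_{S_L}, Id_{S_L}) with S along any F-pullback of the cospan (Id_{S_L}, s_L) is span isomorphic in C to S. -/
open CategoryTheory

universe v u v' u'

variable {C : Type u} [Category.{v} C] {C' : Type u'} [Category.{v'} C']

/-- Between two pullback spans of the same cospan there is a span isomorphism. -/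
lemma exists_spanIso_of_pullbacks {D : Type*} [Category D] {L R : D}
    {S Q : Span' D L R} {c : Cospan' D L R}
    (hS : IsPullbackSpan S c) (hQ : IsPullbackSpan Q c) :
    ∃ Φ : S.apex ⟶ Q.apex, IsSpanIso S Q Φ := by
  obtain ⟨φ, hφ, _⟩ := hQ.2 S hS.1
  obtain ⟨ψ, hψ, _⟩ := hS.2 Q hQ.1
  obtain ⟨_, _, huS⟩ := hS.2 S hS.1
  obtain ⟨_, _, huQ⟩ := hQ.2 Q hQ.1
  have h1 : φ ≫ ψ = 𝟙 S.apex := by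
    rw [huS (φ ≫ ψ) ⟨by rw [Category.assoc, hψ.1, hφ.1], by rw [Category.assoc, hψ.2, hφ.2]⟩,
      huS (𝟙 S.apex) ⟨Category.id_comp _, Category.id_comp _⟩]
  have h2 : ψ ≫ φ = 𝟙 Q.apex := by
    rw [huQ (ψ ≫ φ) ⟨by rw [Category.assoc, hφ.1, hψ.1], by rw [Category.assoc, hφ.2, hψ.2]⟩,
      huQ (𝟙 Q.apex) ⟨Category.id_comp _, Category.id_comp _⟩]
  exact ⟨φ, hφ, ⟨ψ, h1, h2⟩⟩

/-- Unit laws: the `F`-pullback composite of a span `S` with the identity span on `S_R`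
(resp. of the identity span on `S_L` with `S`) is span isomorphic to `S`. -/
theorem stmt12 (F : C ⥤ C') (hF : SpanTight F) {L R : C} (S : Span' C L R) :
    (∀ P : Span' C S.apex (idSpan R).apex, IsFPullback F P (compCospan S (idSpan R)) →
      SpanIsomorphic (compositeAlong S (idSpan R) P) S) ∧
    (∀ P : Span' C (idSpan L).apex S.apex, IsFPullback F P (compCospan (idSpan L) S) →
      SpanIsomorphic (compositeAlong (idSpan L) S P) S) := by
  constructor
  · intro P hP
    -- the canonical F-pullback of (s_R, 𝟙 R)
    set T : Span' C S.apex (idSpan R).apex := ⟨S.apex, 𝟙 S.apex, S.right⟩ with hT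
    have hTpb : IsFPullback F T (compCospan S (idSpan R)) := by
      refine ⟨by simp [PairedWith, T, compCospan, idSpan], ?_, ?_⟩
      · simp [PairedWith, Span'.map, Cospan'.map, T, compCospan, idSpan]
      · intro Q hQ
        refine ⟨Q.left, ⟨by simp [Span'.map, T], ?_⟩, ?_⟩
        · have := hQ
          simp only [PairedWith, Span'.map, Cospan'.map, compCospan, idSpan,
            CategoryTheory.Functor.map_id, Category.comp_id] at this
          exact this
        · intro y hy
          have := hy.1
          exact (Category.comp_id y).symm.trans ((congrArg (y ≫ ·) (F.map_id S.apex)).symm.trans this)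
    obtain ⟨Φ, hΦ⟩ := exists_spanIso_of_pullbacks hP.2 hTpb.2
    obtain ⟨Ψ, hΨ, _⟩ := hF.2 _ P T hP hTpb Φ hΦ
    have hΨl : Ψ ≫ 𝟙 S.apex = P.left := hΨ.1.1
    have hΨr : Ψ ≫ S.right = P.right := hΨ.1.2
    have hΨeq : Ψ = P.left := (Category.comp_id Ψ).symm.trans hΨl
    refine ⟨Ψ, ⟨?_, ?_⟩, hΨ.2⟩
    · show Ψ ≫ S.left = P.left ≫ S.left
      rw [hΨeq]
    · show Ψ ≫ S.right = P.right ≫ (idSpan R).right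
      simp [hΨr, idSpan]
  · intro P hP
    set T : Span' C (idSpan L).apex S.apex := ⟨S.apex, S.left, 𝟙 S.apex⟩ with hT
    have hTpb : IsFPullback F T (compCospan (idSpan L) S) := by
      refine ⟨by simp [PairedWith, T, compCospan, idSpan], ?_, ?_⟩
      · simp [PairedWith, Span'.map, Cospan'.map, T, compCospan, idSpan]
      · intro Q hQ
        refine ⟨Q.right, ⟨?_, by simp [Span'.map, T]⟩, ?_⟩
        · have := hQ
          simp only [PairedWith, Span'.map, Cospan'.map, compCospan, idSpan,
            CategoryTheory.Functor.map_id, Category.comp_id] at this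
          exact this.symm
        · intro y hy
          have := hy.2
          exact (Category.comp_id y).symm.trans ((congrArg (y ≫ ·) (F.map_id S.apex)).symm.trans this)
    obtain ⟨Φ, hΦ⟩ := exists_spanIso_of_pullbacks hP.2 hTpb.2
    obtain ⟨Ψ, hΨ, _⟩ := hF.2 _ P T hP hTpb Φ hΦ
    have hΨl : Ψ ≫ S.left = P.left := hΨ.1.1
    have hΨr : Ψ ≫ 𝟙 S.apex = P.right := hΨ.1.2
    have hΨeq : Ψ = P.right := (Category.comp_id Ψ).symm.trans hΨr
    refine ⟨Ψ, ⟨?_, ?_⟩, hΨ.2⟩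
    · show Ψ ≫ S.left = P.left ≫ (idSpan L).left
      simp [hΨl, idSpan]
    · show Ψ ≫ S.right = P.right ≫ S.right
      rw [hΨeq]
end
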